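/- Let S be an ordered semigroup with real multiplication satisfying axioms O1–O6, and let λ₁, λ₂ be functionals on S. Define λ : S → [0,∞] by λ(f) = sup{ λ₁(f₁) + λ₂(f₂) : f₁, f₂ ∈ S, f₁ + f₂ ≤ f }. Then λ is additive (λ(f + g) = λ(f) + λ(g) for all f, g ∈ S), and the map f ↦ sup_{f' ≪ f} λ(f') is a functional on S that is the least upper bound of λ₁ and λ₂ in F(S). -/

import Mathlib

open scoped ENNReal

/-- `CC s t` : `s` is (sequentially) compactly contained in `t`, written `s ≪ t`. -/
def CC {S : Type*} [AddCommMonoid S] [PartialOrder S] (s t : S) : Prop :=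
  ∀ u : ℕ → S, Monotone u → ∀ x : S, IsLUB (Set.range u) x → t ≤ x → ∃ n, s ≤ u n

/-- An ordered semigroup (positive, with translation invariant order) satisfying axioms O1-O5. -/
structure CuO5 (S : Type*) [AddCommMonoid S] [PartialOrder S] : Prop where
  addRightMono : ∀ {s t : S}, s ≤ t → ∀ r : S, s + r ≤ t + r
  zeroLe : ∀ s : S, 0 ≤ s
  O1 : ∀ u : ℕ → S, Monotone u → ∃ x : S, IsLUB (Set.range u) x
  O2 : ∀ s : S, ∃ u : ℕ → S, (∀ n, CC (u n) (u (n + 1))) ∧ IsLUB (Set.range u) s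
  O3 : ∀ {s₁ t₁ s₂ t₂ : S}, CC s₁ t₁ → CC s₂ t₂ → CC (s₁ + s₂) (t₁ + t₂)
  O4 : ∀ u v : ℕ → S, Monotone u → Monotone v → ∀ x y : S,
    IsLUB (Set.range u) x → IsLUB (Set.range v) y →
    IsLUB (Set.range fun n => u n + v n) (x + y)
  O5 : ∀ {s' s t : S}, CC s' s → s ≤ t → ∃ r : S, s' + r ≤ t ∧ t ≤ s + r

/-- Axioms O1-O6. -/
structure CuO6 (S : Type*) [AddCommMonoid S] [PartialOrder S] extends CuO5 S : Prop where
  O6 : ∀ {s r t : S}, s ≤ r + t → ∀ {s' : S}, CC s' s →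
    ∃ r' t' : S, s' ≤ r' + t' ∧ r' ≤ r ∧ r' ≤ s ∧ t' ≤ t ∧ t' ≤ s

/-- A functional on `S`: additive, order preserving, zero preserving map to `[0,∞]`
preserving suprema of increasing sequences. -/
structure IsFunctional {S : Type*} [AddCommMonoid S] [PartialOrder S] (l : S → ℝ≥0∞) : Prop where
  map_zero : l 0 = 0
  map_add : ∀ s t : S, l (s + t) = l s + l t
  mono : ∀ {s t : S}, s ≤ t → l s ≤ l t
  map_sup : ∀ u : ℕ → S, Monotone u → ∀ x : S, IsLUB (Set.range u) x → l x = ⨆ n, l (u n)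

/-- Real multiplication on `S` : a map `(0,∞] × S → S` additive, order preserving and
sup-(of increasing sequences)-preserving in each variable, with `1 · s = s`.
Scalars are elements of `ℝ≥0∞` required to be positive. -/
structure RealMul (S : Type*) [AddCommMonoid S] [PartialOrder S] where
  smul : ℝ≥0∞ → S → S
  add_left : ∀ {a b : ℝ≥0∞}, 0 < a → 0 < b → ∀ s : S, smul (a + b) s = smul a s + smul b s
  add_right : ∀ {a : ℝ≥0∞}, 0 < a → ∀ s t : S, smul a (s + t) = smul a s + smul a t
  mono_left : ∀ {a b : ℝ≥0∞}, 0 < a → a ≤ b → ∀ s : S, smul a s ≤ smul b s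
  mono_right : ∀ {a : ℝ≥0∞}, 0 < a → ∀ {s t : S}, s ≤ t → smul a s ≤ smul a t
  sup_left : ∀ u : ℕ → ℝ≥0∞, Monotone u → 0 < u 0 → ∀ s : S,
    IsLUB (Set.range fun n => smul (u n) s) (smul (⨆ n, u n) s)
  sup_right : ∀ {a : ℝ≥0∞}, 0 < a → ∀ u : ℕ → S, Monotone u → ∀ x : S,
    IsLUB (Set.range u) x → IsLUB (Set.range fun n => smul a (u n)) (smul a x)
  one_smul : ∀ s : S, smul 1 s = s

/-- `D` is a dense subset of `S`: every element of `S` is the supremum of a rapidly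
increasing sequence of elements of `D`. -/
def IsDenseSub {S : Type*} [AddCommMonoid S] [PartialOrder S] (D : Set S) : Prop :=
  ∀ s : S, ∃ u : ℕ → S, (∀ n, u n ∈ D) ∧ (∀ n, CC (u n) (u (n + 1))) ∧ IsLUB (Set.range u) s

/-- `m` is the least upper bound of the functionals `l₁` and `l₂` in `F(S)`
(pointwise order). -/
def IsFSup {S : Type*} [AddCommMonoid S] [PartialOrder S] (l₁ l₂ m : S → ℝ≥0∞) : Prop :=
  IsFunctional m ∧ (∀ s, l₁ s ≤ m s) ∧ (∀ s, l₂ s ≤ m s) ∧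
    ∀ d : S → ℝ≥0∞, IsFunctional d → (∀ s, l₁ s ≤ d s) → (∀ s, l₂ s ≤ d s) → ∀ s, m s ≤ d s

/-- `m` is the greatest lower bound of the functionals `l₁` and `l₂` in `F(S)`
(pointwise order). -/
def IsFInf {S : Type*} [AddCommMonoid S] [PartialOrder S] (l₁ l₂ m : S → ℝ≥0∞) : Prop :=
  IsFunctional m ∧ (∀ s, m s ≤ l₁ s) ∧ (∀ s, m s ≤ l₂ s) ∧
    ∀ d : S → ℝ≥0∞, IsFunctional d → (∀ s, d s ≤ l₁ s) → (∀ s, d s ≤ l₂ s) → ∀ s, d s ≤ m s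

/-- An isomorphism of ordered semigroups between `S` and the extended natural numbers. -/
def IsOrdSemigroupIso {S : Type*} [AddCommMonoid S] [PartialOrder S] (e : S ≃ ℕ∞) : Prop :=
  (∀ a b : S, e (a + b) = e a + e b) ∧ e 0 = 0 ∧ ∀ a b : S, a ≤ b ↔ e a ≤ e b
set_option linter.unusedSectionVars false

namespace SKaux

variable {S : Type*} [AddCommMonoid S] [PartialOrder S]

lemma isLUB_const {x : S} : IsLUB (Set.range fun _ : ℕ => x) x := by
  constructor
  · rintro y ⟨n, rfl⟩; exact le_rfl
  · intro y hy; exact hy ⟨0, rfl⟩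

lemma cc_le {s t : S} (h : CC s t) : s ≤ t := by
  obtain ⟨n, hn⟩ := h (fun _ => t) monotone_const t isLUB_const le_rfl
  exact hn

lemma cc_of_le_left {s' s t : S} (h1 : s' ≤ s) (h : CC s t) : CC s' t := by
  intro u hu x hx ht
  obtain ⟨n, hn⟩ := h u hu x hx ht
  exact ⟨n, h1.trans hn⟩

lemma cc_of_le_right {s t t' : S} (h : CC s t) (h1 : t ≤ t') : CC s t' := by
  intro u hu x hx ht
  exact h u hu x hx (h1.trans ht)

lemma cc_zero (hS : CuO5 S) (t : S) : CC 0 t := by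
  intro u _ x _ _
  exact ⟨0, hS.zeroLe _⟩

lemma add_le_add_sk (hS : CuO5 S) {a b c d : S} (h1 : a ≤ b) (h2 : c ≤ d) :
    a + c ≤ b + d := by
  calc a + c ≤ b + c := hS.addRightMono h1 c
    _ = c + b := add_comm _ _
    _ ≤ d + b := hS.addRightMono h2 b
    _ = b + d := add_comm _ _

lemma le_add_right_sk (hS : CuO5 S) (a b : S) : a ≤ a + b := by
  have := hS.addRightMono (hS.zeroLe b) a
  rwa [zero_add, add_comm] at this

lemma le_add_left_sk (hS : CuO5 S) (a b : S) : a ≤ b + a := by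
  rw [add_comm]; exact le_add_right_sk hS a b

lemma monotone_nsmul (hS : CuO5 S) (m : ℕ) {a b : S} (h : a ≤ b) : m • a ≤ m • b := by
  induction m with
  | zero => simp
  | succ n ih =>
    rw [succ_nsmul, succ_nsmul]
    exact add_le_add_sk hS ih h

-- rapid sequence helpers
lemma rapid_mono {u : ℕ → S} (hu : ∀ n, CC (u n) (u (n+1))) : Monotone u :=
  monotone_nat_of_le_succ fun n => cc_le (hu n)

lemma rapid_le {u : ℕ → S} {s : S} (hlub : IsLUB (Set.range u) s) (n : ℕ) : u n ≤ s :=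
  hlub.1 ⟨n, rfl⟩

lemma rapid_cc {u : ℕ → S} {s : S} (hu : ∀ n, CC (u n) (u (n+1)))
    (hlub : IsLUB (Set.range u) s) (n : ℕ) : CC (u n) s :=
  cc_of_le_right (hu n) (rapid_le hlub (n+1))

lemma isLUB_add_const (hS : CuO5 S) {u : ℕ → S} {x : S} (hu : Monotone u)
    (hx : IsLUB (Set.range u) x) (c : S) :
    IsLUB (Set.range fun n => u n + c) (x + c) :=
  hS.O4 u (fun _ => c) hu monotone_const x c hx isLUB_const

lemma isLUB_nsmul (hS : CuO5 S) {u : ℕ → S} {x : S} (hu : Monotone u)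
    (hx : IsLUB (Set.range u) x) (m : ℕ) :
    IsLUB (Set.range fun n => m • u n) (m • x) := by
  induction m with
  | zero => simpa using (isLUB_const (x := (0:S)))
  | succ n ih =>
    have h4 := hS.O4 (fun k => n • u k) u (fun i j hij => monotone_nsmul hS n (hu hij)) hu
      (n • x) x ih hx
    simpa [succ_nsmul] using h4




/-- division by a positive natural -/
noncomputable def DK (rm : RealMul S) (K : ℕ) (s : S) : S := rm.smul ((K:ℝ≥0∞))⁻¹ s

lemma DK_posscalar (K : ℕ) : (0:ℝ≥0∞) < ((K:ℝ≥0∞))⁻¹ :=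
  ENNReal.inv_pos.mpr (ENNReal.natCast_ne_top K)

lemma DK_add (rm : RealMul S) (K : ℕ) (s t : S) :
    DK rm K (s + t) = DK rm K s + DK rm K t :=
  rm.add_right (DK_posscalar K) s t

lemma DK_mono (rm : RealMul S) (K : ℕ) {s t : S} (h : s ≤ t) :
    DK rm K s ≤ DK rm K t :=
  rm.mono_right (DK_posscalar K) h

lemma nsmul_smul (rm : RealMul S) {t : ℝ≥0∞} (ht : 0 < t) (s : S) :
    ∀ m : ℕ, 0 < m → m • rm.smul t s = rm.smul (m * t) s := by
  intro m
  induction m with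
  | zero => intro h; exact absurd h (lt_irrefl 0)
  | succ n ih =>
    intro _
    rcases Nat.eq_zero_or_pos n with h0 | hp
    · subst h0; simp
    · have hnt : (0:ℝ≥0∞) < (n:ℝ≥0∞) * t :=
        ENNReal.mul_pos (by exact_mod_cast hp.ne') ht.ne'
      rw [succ_nsmul, ih hp, ← rm.add_left hnt ht]
      congr 1
      push_cast
      ring

lemma smul_nsmul_comm (rm : RealMul S) {t : ℝ≥0∞} (ht : 0 < t) (s : S) :
    ∀ m : ℕ, 0 < m → rm.smul t (m • s) = m • rm.smul t s := by
  intro m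
  induction m with
  | zero => intro h; exact absurd h (lt_irrefl 0)
  | succ n ih =>
    intro _
    rcases Nat.eq_zero_or_pos n with h0 | hp
    · subst h0; simp
    · rw [succ_nsmul, rm.add_right ht, ih hp, ← succ_nsmul]

lemma nsmul_DK (rm : RealMul S) {K : ℕ} (hK : K ≠ 0) (s : S) :
    K • DK rm K s = s := by
  rw [DK, nsmul_smul rm (DK_posscalar K) s K (Nat.pos_of_ne_zero hK),
    ENNReal.mul_inv_cancel (by exact_mod_cast hK) (ENNReal.natCast_ne_top K), rm.one_smul]

lemma DK_nsmul (rm : RealMul S) {K : ℕ} (hK : K ≠ 0) (s : S) :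
    DK rm K (K • s) = s := by
  rw [DK, smul_nsmul_comm rm (DK_posscalar K) s K (Nat.pos_of_ne_zero hK)]
  exact nsmul_DK rm hK s

lemma fn_nsmul {l : S → ℝ≥0∞} (h : IsFunctional l) (m : ℕ) (s : S) :
    l (m • s) = m * l s := by
  induction m with
  | zero => simpa using h.map_zero
  | succ n ih =>
    rw [succ_nsmul, h.map_add, ih]
    push_cast
    ring

lemma fn_DK {l : S → ℝ≥0∞} (h : IsFunctional l) (rm : RealMul S) {K : ℕ} (hK : K ≠ 0)
    (s : S) : l (DK rm K s) = ((K:ℝ≥0∞))⁻¹ * l s := by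
  have h1 : (K:ℝ≥0∞) * l (DK rm K s) = l s := by
    rw [← fn_nsmul h, nsmul_DK rm hK]
  rw [← h1, ← mul_assoc,
    ENNReal.inv_mul_cancel (by exact_mod_cast hK) (ENNReal.natCast_ne_top K), one_mul]

lemma DK_le_of_lt {l : S → ℝ≥0∞} (h : IsFunctional l) (rm : RealMul S) {c : S} {δ : ℝ≥0∞}
    {n : ℕ} (hn : n ≠ 0) (hlt : l c ≤ (n:ℝ≥0∞) * δ) : l (DK rm n c) ≤ δ := by
  rw [fn_DK h rm hn]
  calc ((n:ℝ≥0∞))⁻¹ * l c ≤ ((n:ℝ≥0∞))⁻¹ * ((n:ℝ≥0∞) * δ) := mul_le_mul_right hlt _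
    _ = δ := by
        rw [← mul_assoc, ENNReal.inv_mul_cancel (by exact_mod_cast hn)
          (ENNReal.natCast_ne_top _), one_mul]

lemma exists_DK_small {l₁ l₂ : S → ℝ≥0∞} (h₁ : IsFunctional l₁) (h₂ : IsFunctional l₂)
    (rm : RealMul S) (c : S) (hc1 : l₁ c ≠ ∞) (hc2 : l₂ c ≠ ∞) {δ : ℝ≥0∞} (hδ0 : δ ≠ 0) :
    ∃ K : ℕ, K ≠ 0 ∧ l₁ (DK rm K c) ≤ δ ∧ l₂ (DK rm K c) ≤ δ := by
  have hmax : max (l₁ c) (l₂ c) ≠ ∞ := by simp [hc1, hc2]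
  obtain ⟨n, hn⟩ := ENNReal.exists_nat_gt (ENNReal.div_lt_top hmax hδ0).ne
  have hlt : max (l₁ c) (l₂ c) ≤ ((n+1:ℕ):ℝ≥0∞) * δ := by
    rcases eq_or_ne δ ∞ with rfl | hδt
    · rw [ENNReal.mul_top (by exact_mod_cast Nat.succ_ne_zero n)]
      exact le_top
    · have h' := (ENNReal.div_lt_iff (Or.inl hδ0) (Or.inl hδt)).mp
        (hn.trans_le (by exact_mod_cast Nat.cast_le.mpr (Nat.le_succ n)))
      exact_mod_cast h'.le
  exact ⟨n+1, Nat.succ_ne_zero n,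
    DK_le_of_lt h₁ rm (Nat.succ_ne_zero n) ((le_max_left _ _).trans hlt),
    DK_le_of_lt h₂ rm (Nat.succ_ne_zero n) ((le_max_right _ _).trans hlt)⟩


lemma cancel_sk (hS : CuO5 S) (rm : RealMul S) {a b c : S} (h : a + c ≤ b + c)
    {K : ℕ} (hK : K ≠ 0) : a ≤ b + DK rm K c := by
  have key : ∀ m : ℕ, m • a + c ≤ m • b + c := by
    intro m
    induction m with
    | zero => simp
    | succ n ih =>
      have h1 : (n+1) • a + c = n • a + (a + c) := by rw [succ_nsmul]; abel
      have h2 : n • a + (b + c) = b + (n • a + c) := by abel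
      have h3 : b + (n • b + c) = (n+1) • b + c := by rw [succ_nsmul]; abel
      calc (n+1) • a + c = n • a + (a + c) := h1
        _ ≤ n • a + (b + c) := add_le_add_sk hS le_rfl h
        _ = b + (n • a + c) := h2
        _ ≤ b + (n • b + c) := add_le_add_sk hS le_rfl ih
        _ = (n+1) • b + c := h3
  have h4 : K • a ≤ K • b + c := le_trans (le_add_right_sk hS _ _) (key K)
  have h5 := DK_mono rm K h4
  rwa [DK_nsmul rm hK, DK_add, DK_nsmul rm hK] at h5

lemma DK_cc (hS : CuO5 S) (rm : RealMul S) {K : ℕ} (hK : K ≠ 0) {s t : S} (h : CC s t) :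
    CC (DK rm K s) (DK rm K t) := by
  intro u hu x hx hle
  have h2 : t ≤ K • x := by
    have h3 := monotone_nsmul hS K hle
    rwa [nsmul_DK rm hK] at h3
  obtain ⟨n, hn⟩ := h (fun n => K • u n) (fun i j hij => monotone_nsmul hS K (hu hij))
    (K • x) (isLUB_nsmul hS hu hx K) h2
  refine ⟨n, ?_⟩
  have h6 := DK_mono rm K hn
  rwa [DK_nsmul rm hK] at h6

lemma DK_isLUB (rm : RealMul S) (K : ℕ) {u : ℕ → S} (hu : Monotone u) {x : S}
    (hx : IsLUB (Set.range u) x) :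
    IsLUB (Set.range fun n => DK rm K (u n)) (DK rm K x) :=
  rm.sup_right (DK_posscalar K) u hu x hx

/-- window picker : get a term of the sequence whose `l`-value is δ-close below `l x`. -/
lemma exists_window {l : S → ℝ≥0∞} (h : IsFunctional l) {u : ℕ → S} (hu : Monotone u)
    {x : S} (hx : IsLUB (Set.range u) x) (hfin : l x ≠ ∞) {δ : ℝ≥0∞} (hδ : δ ≠ 0) :
    ∃ N, l x ≤ l (u N) + δ := by
  have hsup : l x = ⨆ n, l (u n) := h.map_sup u hu x hx
  rcases eq_or_ne (l x) 0 with h0 | h0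
  · exact ⟨0, by rw [h0]; exact zero_le⟩
  by_cases hδx : l x ≤ δ
  · exact ⟨0, hδx.trans (le_add_left le_rfl)⟩
  have hlt : l x - δ < l x := ENNReal.sub_lt_self hfin h0 hδ
  have hlt2 : l x - δ < ⨆ n, l (u n) := by rw [← hsup]; exact hlt
  obtain ⟨N, hN⟩ := lt_iSup_iff.mp hlt2
  exact ⟨N, tsub_le_iff_right.mp hN.le⟩


end SKaux

/-- The Kantorovich-type candidate supremum of two functionals. -/
noncomputable def klam {S : Type*} [AddCommMonoid S] [PartialOrder S]
    (l₁ l₂ : S → ℝ≥0∞) (f : S) : ℝ≥0∞ :=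
  sSup {x | ∃ f₁ f₂ : S, f₁ + f₂ ≤ f ∧ x = l₁ f₁ + l₂ f₂}

namespace SKaux
variable {S : Type*} [AddCommMonoid S] [PartialOrder S] {l₁ l₂ : S → ℝ≥0∞}

lemma le_klam {f₁ f₂ f : S} (h : f₁ + f₂ ≤ f) : l₁ f₁ + l₂ f₂ ≤ klam l₁ l₂ f :=
  le_sSup ⟨f₁, f₂, h, rfl⟩

lemma klam_le {f : S} {c : ℝ≥0∞} (h : ∀ f₁ f₂ : S, f₁ + f₂ ≤ f → l₁ f₁ + l₂ f₂ ≤ c) :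
    klam l₁ l₂ f ≤ c := by
  refine sSup_le ?_
  rintro x ⟨f₁, f₂, hle, rfl⟩
  exact h f₁ f₂ hle

lemma klam_mono {f f' : S} (h : f ≤ f') : klam l₁ l₂ f ≤ klam l₁ l₂ f' :=
  klam_le fun f₁ f₂ hle => le_klam (hle.trans h)

lemma l1_le_klam (hS : CuO5 S) (h₂ : IsFunctional l₂) (f : S) : l₁ f ≤ klam l₁ l₂ f := by
  have := le_klam (l₁ := l₁) (l₂ := l₂) (f₁ := f) (f₂ := 0) (f := f)
    (by rw [add_zero])
  rwa [h₂.map_zero, add_zero] at this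

lemma l2_le_klam (hS : CuO5 S) (h₁ : IsFunctional l₁) (f : S) : l₂ f ≤ klam l₁ l₂ f := by
  have := le_klam (l₁ := l₁) (l₂ := l₂) (f₁ := 0) (f₂ := f) (f := f)
    (by rw [zero_add])
  rwa [h₁.map_zero, zero_add] at this

lemma klam_zero (hS : CuO5 S) (h₁ : IsFunctional l₁) (h₂ : IsFunctional l₂) :
    klam l₁ l₂ (0:S) = 0 := by
  refine le_antisymm (klam_le fun f₁ f₂ hle => ?_) (zero_le)
  have h1 : f₁ = 0 := le_antisymm
    (le_trans (le_add_right_sk hS f₁ f₂) hle) (hS.zeroLe f₁)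
  have h2 : f₂ = 0 := le_antisymm
    (le_trans (le_add_left_sk hS f₂ f₁) hle) (hS.zeroLe f₂)
  rw [h1, h2, h₁.map_zero, h₂.map_zero, add_zero]

lemma klam_nonempty (hS : CuO5 S) (f : S) :
    Nonempty {x : ℝ≥0∞ // x ∈ {x | ∃ f₁ f₂ : S, f₁ + f₂ ≤ f ∧ x = l₁ f₁ + l₂ f₂}} :=
  ⟨⟨l₁ 0 + l₂ 0, 0, 0, by rw [add_zero]; exact hS.zeroLe f, rfl⟩⟩

lemma klam_add_left (hS : CuO5 S) (h₁ : IsFunctional l₁) {x F' F : S}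
    (h : x + F' ≤ F) : l₁ x + klam l₁ l₂ F' ≤ klam l₁ l₂ F := by
  rw [klam, sSup_eq_iSup']
  have : Nonempty {v : ℝ≥0∞ // v ∈ {v | ∃ f₁ f₂ : S, f₁ + f₂ ≤ F' ∧ v = l₁ f₁ + l₂ f₂}} :=
    klam_nonempty hS F'
  rw [ENNReal.add_iSup]
  refine iSup_le ?_
  rintro ⟨v, f₁, f₂, hle, rfl⟩
  have h3 : (x + f₁) + f₂ ≤ F := by
    rw [add_assoc]
    exact (add_le_add_sk hS le_rfl hle).trans h
  calc l₁ x + (l₁ f₁ + l₂ f₂) = l₁ (x + f₁) + l₂ f₂ := by rw [h₁.map_add]; ring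
    _ ≤ klam l₁ l₂ F := le_klam h3

lemma klam_add_right (hS : CuO5 S) (h₂ : IsFunctional l₂) {y G' G : S}
    (h : y + G' ≤ G) : l₂ y + klam l₁ l₂ G' ≤ klam l₁ l₂ G := by
  rw [klam, sSup_eq_iSup']
  have : Nonempty {v : ℝ≥0∞ // v ∈ {v | ∃ f₁ f₂ : S, f₁ + f₂ ≤ G' ∧ v = l₁ f₁ + l₂ f₂}} :=
    klam_nonempty hS G'
  rw [ENNReal.add_iSup]
  refine iSup_le ?_
  rintro ⟨v, f₁, f₂, hle, rfl⟩
  have h3 : f₁ + (y + f₂) ≤ G := by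
    have : f₁ + (y + f₂) = y + (f₁ + f₂) := by abel
    rw [this]
    exact (add_le_add_sk hS le_rfl hle).trans h
  calc l₂ y + (l₁ f₁ + l₂ f₂) = l₁ f₁ + l₂ (y + f₂) := by rw [h₂.map_add]; ring
    _ ≤ klam l₁ l₂ G := le_klam h3

/-- One step of the exhaustion: peel a half of `m` off, placing pieces into `F` and `G`. -/
lemma step_sk (hS : CuO6 S) (rm : RealMul S) (h₁ : IsFunctional l₁) (h₂ : IsFunctional l₂)
    {f g e₂ m F G k : S} {δ : ℝ≥0∞} (hδ0 : δ ≠ 0)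
    (hinv : m + e₂ ≤ F + G + k) (hm : m ≤ f + g) (hF : F ≤ f) (hG : G ≤ g)
    (hfin1 : l₁ (f + g) ≠ ∞) (hfin2 : l₂ (f + g) ≠ ∞) :
    ∃ x y m' F' G' k' : S,
      (m' + e₂ ≤ F' + G' + k') ∧ (m' ≤ m) ∧ (F' ≤ F) ∧ (G' ≤ G) ∧
      (x + F' ≤ F) ∧ (y + G' ≤ G) ∧
      (l₁ m ≤ l₁ x + l₁ y + l₁ m' + (δ + δ)) ∧
      (l₁ m' + 2⁻¹ * l₁ m ≤ l₁ m + l₁ k + (δ + δ)) ∧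
      (l₁ k' ≤ l₁ k + δ) ∧ (l₂ k' ≤ l₂ k + δ) := by
  have hO5 := hS.toCuO5
  have hffg : f ≤ f + g := le_add_right_sk hO5 f g
  have hgfg : g ≤ f + g := le_add_left_sk hO5 g f
  -- rapid sequence for m and its halves
  obtain ⟨c, hcr, hclub⟩ := hS.O2 m
  set D2 : S → S := DK rm 2 with hD2
  have twoD2 : ∀ z : S, D2 z + D2 z = z := by
    intro z
    rw [hD2, ← two_nsmul]
    exact nsmul_DK rm two_ne_zero z
  have hD2le : ∀ z : S, D2 z ≤ z := by
    intro z
    conv_rhs => rw [← twoD2 z]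
    exact le_add_right_sk hO5 _ _
  set d : ℕ → S := fun l => D2 (c l) with hd
  have hdr : ∀ l, CC (d l) (d (l+1)) := fun l => DK_cc hO5 rm two_ne_zero (hcr l)
  have hdlub : IsLUB (Set.range d) (D2 m) := DK_isLUB rm 2 (rapid_mono hcr) hclub
  have hmfin : l₁ m ≠ ∞ := ((h₁.mono hm).trans_lt hfin1.lt_top).ne
  obtain ⟨l₀, hl₀⟩ := exists_window h₁ (rapid_mono hcr) hclub hmfin hδ0
  set σ0 := d l₀
  set σ2 := d (l₀+2)
  have hσ2m : σ2 ≤ m := (rapid_le hdlub (l₀+2)).trans (hD2le m)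
  have hW1 : l₁ m ≤ l₁ σ0 + l₁ σ0 + δ := by
    have h3 : l₁ (c l₀) = l₁ σ0 + l₁ σ0 := by
      rw [← h₁.map_add, twoD2]
    calc l₁ m ≤ l₁ (c l₀) + δ := hl₀
      _ = l₁ σ0 + l₁ σ0 + δ := by rw [h3]
  -- split σ2 along F + (G + k)
  have hs2FGk : σ2 ≤ F + (G + k) := by
    rw [← add_assoc]
    exact hσ2m.trans ((le_add_right_sk hO5 m e₂).trans hinv)
  obtain ⟨xh, rh, hσ1cov, hxhF, hxhσ2, hrhGk, hrhσ2⟩ := hS.O6 hs2FGk (hdr (l₀+1))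
  -- refine the f-side
  obtain ⟨u, hur, hulub⟩ := hS.O2 xh
  obtain ⟨v, hvr, hvlub⟩ := hS.O2 rh
  have humono := rapid_mono hur
  have hvmono := rapid_mono hvr
  have hsumlub := hS.O4 u v humono hvmono xh rh hulub hvlub
  have hsummono : Monotone fun n => u n + v n :=
    fun i j hij => add_le_add_sk hO5 (humono hij) (hvmono hij)
  obtain ⟨P₀, hP₀⟩ := (hdr l₀) _ hsummono _ hsumlub hσ1cov
  have hxhfin : l₁ xh ≠ ∞ := ((h₁.mono ((hxhF.trans hF).trans hffg)).trans_lt hfin1.lt_top).ne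
  obtain ⟨P₁, hP₁⟩ := exists_window h₁ humono hulub hxhfin hδ0
  set P := max P₀ P₁ with hP
  have hP0' : σ0 ≤ u P + v P :=
    hP₀.trans (add_le_add_sk hO5 (humono (le_max_left _ _)) (hvmono (le_max_left _ _)))
  have hPwin : l₁ xh ≤ l₁ (u P) + δ :=
    hP₁.trans (add_le_add_left (h₁.mono (humono (le_max_right _ _))) δ)
  -- split the r-side along G + k
  have hv3 : v (P+3) ≤ G + k := (rapid_le hvlub (P+3)).trans hrhGk
  obtain ⟨yh, uh, hv2cov, hyhG, hyhv3, huhk, huhv3⟩ := hS.O6 hv3 (hvr (P+2))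
  obtain ⟨w, hwr, hwlub⟩ := hS.O2 yh
  have hwmono := rapid_mono hwr
  have hyulub := isLUB_add_const hO5 hwmono hwlub uh
  have hyumono : Monotone fun r => w r + uh :=
    fun i j hij => add_le_add_sk hO5 (hwmono hij) le_rfl
  obtain ⟨R₀, hR₀⟩ := (hvr (P+1)) _ hyumono _ hyulub hv2cov
  have hyhfin : l₁ yh ≠ ∞ := ((h₁.mono ((hyhG.trans hG).trans hgfg)).trans_lt hfin1.lt_top).ne
  obtain ⟨R₁, hR₁⟩ := exists_window h₁ hwmono hwlub hyhfin hδ0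
  set R := max R₀ R₁ with hR
  have hR0' : v (P+1) ≤ w R + uh :=
    hR₀.trans (add_le_add_sk hO5 (hwmono (le_max_left _ _)) le_rfl)
  have hRwin : l₁ yh ≤ l₁ (w R) + δ :=
    hR₁.trans (add_le_add_left (h₁.mono (hwmono (le_max_right _ _))) δ)
  -- the cover of σ0
  have hcov : σ0 ≤ u P + w R + uh := by
    calc σ0 ≤ u P + v P := hP0'
      _ ≤ u P + v (P+1) := add_le_add_sk hO5 le_rfl (hvmono (Nat.le_succ P))
      _ ≤ u P + (w R + uh) := add_le_add_sk hO5 le_rfl hR0'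
      _ = u P + w R + uh := by rw [add_assoc]
  -- complements
  obtain ⟨F', hF'1, hF'2⟩ := hS.O5 (hur (P+1)) ((rapid_le hulub (P+2)).trans hxhF)
  obtain ⟨G', hG'1, hG'2⟩ := hS.O5 (hwr (R+1)) ((rapid_le hwlub (R+2)).trans hyhG)
  -- complement of the burned part inside m
  have hccburn : CC (u (P+2) + w (R+2)) (u (P+3) + w (R+3)) := hS.O3 (hur (P+2)) (hwr (R+2))
  have hburnm : u (P+3) + w (R+3) ≤ m := by
    have hx3 : u (P+3) ≤ σ2 := (rapid_le hulub (P+3)).trans hxhσ2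
    have hy3 : w (R+3) ≤ σ2 := ((rapid_le hwlub (R+3)).trans hyhv3).trans
      ((rapid_le hvlub (P+3)).trans hrhσ2)
    calc u (P+3) + w (R+3) ≤ σ2 + σ2 := add_le_add_sk hO5 hx3 hy3
      _ = c (l₀+2) := twoD2 _
      _ ≤ m := rapid_le hclub _
  obtain ⟨E, hE1, hE2⟩ := hS.O5 hccburn hburnm
  -- junk control
  have hb1 : l₁ (u (P+2) + w (R+2)) ≠ ∞ := by
    have : u (P+2) + w (R+2) ≤ f + g :=
      add_le_add_sk hO5 (((rapid_le hulub _).trans hxhF).trans hF)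
        (((rapid_le hwlub _).trans hyhG).trans hG)
    exact ((h₁.mono this).trans_lt hfin1.lt_top).ne
  have hb2 : l₂ (u (P+2) + w (R+2)) ≠ ∞ := by
    have : u (P+2) + w (R+2) ≤ f + g :=
      add_le_add_sk hO5 (((rapid_le hulub _).trans hxhF).trans hF)
        (((rapid_le hwlub _).trans hyhG).trans hG)
    exact ((h₂.mono this).trans_lt hfin2.lt_top).ne
  obtain ⟨K, hK0, hK1, hK2⟩ := exists_DK_small h₁ h₂ rm _ hb1 hb2 hδ0
  -- cancellation
  have hCL0 : (E + e₂) + (u (P+2) + w (R+2)) ≤ (F' + G' + k) + (u (P+2) + w (R+2)) := by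
    have e1 : (E + e₂) + (u (P+2) + w (R+2)) = ((u (P+2) + w (R+2)) + E) + e₂ := by abel
    have e2 : (u (P+2) + F') + (w (R+2) + G') + k
        = (F' + G' + k) + (u (P+2) + w (R+2)) := by abel
    calc (E + e₂) + (u (P+2) + w (R+2)) = ((u (P+2) + w (R+2)) + E) + e₂ := e1
      _ ≤ m + e₂ := hO5.addRightMono hE1 e₂
      _ ≤ F + G + k := hinv
      _ ≤ (u (P+2) + F') + (w (R+2) + G') + k :=
          add_le_add_sk hO5 (add_le_add_sk hO5 hF'2 hG'2) le_rfl
      _ = (F' + G' + k) + (u (P+2) + w (R+2)) := e2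
  have hCL : E + e₂ ≤ (F' + G' + k) + DK rm K (u (P+2) + w (R+2)) :=
    cancel_sk hO5 rm hCL0 hK0
  refine ⟨u P, w R, E, F', G', k + DK rm K (u (P+2) + w (R+2)),
    ?_, ?_, ?_, ?_, ?_, ?_, ?_, ?_, ?_, ?_⟩
  · -- new invariant
    have e3 : (F' + G' + k) + DK rm K (u (P+2) + w (R+2))
        = F' + G' + (k + DK rm K (u (P+2) + w (R+2))) := by abel
    rw [← e3]
    exact hCL
  · exact (le_add_left_sk hO5 E _).trans hE1
  · exact (le_add_left_sk hO5 F' _).trans hF'1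
  · exact (le_add_left_sk hO5 G' _).trans hG'1
  · exact (hO5.addRightMono (humono (Nat.le_succ P)) F').trans hF'1
  · exact (hO5.addRightMono (hwmono (Nat.le_succ R)) G').trans hG'1
  · -- telescope
    calc l₁ m ≤ l₁ ((u (P+3) + w (R+3)) + E) := h₁.mono hE2
      _ = l₁ (u (P+3)) + l₁ (w (R+3)) + l₁ E := by rw [h₁.map_add, h₁.map_add]
      _ ≤ l₁ xh + l₁ yh + l₁ E :=
          add_le_add (add_le_add (h₁.mono (rapid_le hulub _)) (h₁.mono (rapid_le hwlub _)))
            le_rfl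
      _ ≤ (l₁ (u P) + δ) + (l₁ (w R) + δ) + l₁ E := add_le_add (add_le_add hPwin hRwin) le_rfl
      _ = l₁ (u P) + l₁ (w R) + l₁ E + (δ + δ) := by ring
  · -- decay
    have hhalf : 2⁻¹ * l₁ m ≤ l₁ σ0 + δ := by
      calc 2⁻¹ * l₁ m ≤ 2⁻¹ * (l₁ σ0 + l₁ σ0 + δ) := mul_le_mul_right hW1 _
        _ = 2⁻¹ * (2 * l₁ σ0) + 2⁻¹ * δ := by ring
        _ = l₁ σ0 + 2⁻¹ * δ := by
            rw [← mul_assoc, ENNReal.inv_mul_cancel (by norm_num) (by norm_num), one_mul]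
        _ ≤ l₁ σ0 + δ := by
            gcongr
            rw [← ENNReal.div_eq_inv_mul]
            exact ENNReal.half_le_self
    have hσ0val : l₁ σ0 ≤ l₁ (u P) + l₁ (w R) + l₁ k := by
      calc l₁ σ0 ≤ l₁ (u P + w R + uh) := h₁.mono hcov
        _ = l₁ (u P) + l₁ (w R) + l₁ uh := by rw [h₁.map_add, h₁.map_add]
        _ ≤ l₁ (u P) + l₁ (w R) + l₁ k := add_le_add le_rfl (h₁.mono huhk)
    have hEm : l₁ E + (l₁ (u P) + l₁ (w R)) ≤ l₁ m := by
      calc l₁ E + (l₁ (u P) + l₁ (w R))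
          ≤ l₁ E + (l₁ (u (P+2)) + l₁ (w (R+2))) := by
            gcongr
            · exact h₁.mono (humono (by omega))
            · exact h₁.mono (hwmono (by omega))
        _ = l₁ ((u (P+2) + w (R+2)) + E) := by rw [h₁.map_add, h₁.map_add]; ring
        _ ≤ l₁ m := h₁.mono hE1
    calc l₁ E + 2⁻¹ * l₁ m ≤ l₁ E + (l₁ σ0 + δ) := add_le_add le_rfl hhalf
      _ ≤ l₁ E + (l₁ (u P) + l₁ (w R) + l₁ k + δ) := by gcongr
      _ = (l₁ E + (l₁ (u P) + l₁ (w R))) + l₁ k + δ := by ring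
      _ ≤ l₁ m + l₁ k + δ := by gcongr
      _ ≤ l₁ m + l₁ k + (δ + δ) := by gcongr; exact le_add_left le_rfl
  · rw [h₁.map_add]
    exact add_le_add le_rfl hK1
  · rw [h₂.map_add]
    exact add_le_add le_rfl hK2



lemma slack_sk {A B d J : ℝ≥0∞} (hJ : 1 ≤ J) :
    (d + d) + (A + (d + d)) + J * ((A + d) + (B + d) + d) ≤ (7 * J) * (A + B + d) := by
  have hA : A ≤ J * A := le_mul_of_one_le_left (zero_le) hJ
  have hd : 4 * d ≤ 4 * J * d := by
    calc 4 * d ≤ 4 * (J * d) := mul_le_mul_right (le_mul_of_one_le_left zero_le hJ) 4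
      _ = 4 * J * d := (mul_assoc _ _ _).symm
  have h2 : (2 * J) * A ≤ (7 * J) * A := mul_le_mul_left (mul_le_mul_left (by norm_num) J) A
  have h3 : J * B ≤ (7 * J) * B :=
    mul_le_mul_left (le_mul_of_one_le_left zero_le (by norm_num)) B
  calc (d + d) + (A + (d + d)) + J * ((A + d) + (B + d) + d)
      = A + 4 * d + J * (A + B + 3 * d) := by ring
    _ ≤ J * A + 4 * J * d + J * (A + B + 3 * d) := add_le_add (add_le_add hA hd) le_rfl
    _ = (2 * J) * A + J * B + (7 * J) * d := by ring
    _ ≤ (7 * J) * A + (7 * J) * B + (7 * J) * d := add_le_add (add_le_add h2 h3) le_rfl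
    _ = (7 * J) * (A + B + d) := by ring

lemma rec_sk (hS : CuO6 S) (rm : RealMul S) (h₁ : IsFunctional l₁) (h₂ : IsFunctional l₂)
    {f g e₂ b : S} (hb : CC b e₂)
    (hfin1 : l₁ (f + g) ≠ ∞) (hfin2 : l₂ (f + g) ≠ ∞)
    {δ : ℝ≥0∞} (hδ0 : δ ≠ 0) (hδt : δ ≠ ∞) :
    ∀ j : ℕ, ∀ m F G k : S, m + e₂ ≤ F + G + k → m ≤ f + g → F ≤ f → G ≤ g →
      l₁ k ≠ ∞ → l₂ k ≠ ∞ →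
      l₁ m + l₂ b ≤ klam l₁ l₂ F + klam l₁ l₂ G
        + (2:ℝ≥0∞)⁻¹^j * l₁ m + (7:ℝ≥0∞)^j * (l₁ k + l₂ k + δ) := by
  have hO5 := hS.toCuO5
  intro j
  induction j with
  | zero =>
    intro m F G k hinv hm hF hG hk1 hk2
    have he₂ : e₂ ≤ F + (G + k) := by
      rw [← add_assoc]
      exact (le_add_left_sk hO5 e₂ m).trans hinv
    obtain ⟨z, wb, hbcov, hzF, _, hwbGk, _⟩ := hS.O6 he₂ hb
    have hz : l₂ z ≤ klam l₁ l₂ F := (l2_le_klam hO5 h₁ z).trans (klam_mono hzF)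
    have hwb : l₂ wb ≤ klam l₁ l₂ G + l₂ k := by
      obtain ⟨wq, hwqr, hwqlub⟩ := hS.O2 wb
      rw [h₂.map_sup wq (rapid_mono hwqr) wb hwqlub]
      refine iSup_le fun q => ?_
      obtain ⟨wG, wk, hcov2, hwGG, _, hwkk, _⟩ := hS.O6 hwbGk (rapid_cc hwqr hwqlub q)
      calc l₂ (wq q) ≤ l₂ wG + l₂ wk := by rw [← h₂.map_add]; exact h₂.mono hcov2
        _ ≤ klam l₁ l₂ G + l₂ k :=
            add_le_add ((l2_le_klam hO5 h₁ wG).trans (klam_mono hwGG)) (h₂.mono hwkk)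
    have hb2 : l₂ b ≤ klam l₁ l₂ F + klam l₁ l₂ G + l₂ k := by
      calc l₂ b ≤ l₂ z + l₂ wb := by rw [← h₂.map_add]; exact h₂.mono hbcov
        _ ≤ klam l₁ l₂ F + (klam l₁ l₂ G + l₂ k) := add_le_add hz hwb
        _ = klam l₁ l₂ F + klam l₁ l₂ G + l₂ k := by ring
    calc l₁ m + l₂ b ≤ l₁ m + (klam l₁ l₂ F + klam l₁ l₂ G + l₂ k) := add_le_add le_rfl hb2
      _ ≤ klam l₁ l₂ F + klam l₁ l₂ G + l₁ m + (l₁ k + l₂ k + δ) := by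
          calc l₁ m + (klam l₁ l₂ F + klam l₁ l₂ G + l₂ k)
              = klam l₁ l₂ F + klam l₁ l₂ G + l₁ m + (0 + l₂ k + 0) := by ring
            _ ≤ klam l₁ l₂ F + klam l₁ l₂ G + l₁ m + (l₁ k + l₂ k + δ) := by gcongr <;> simp
      _ = klam l₁ l₂ F + klam l₁ l₂ G + (2:ℝ≥0∞)⁻¹^0 * l₁ m + (7:ℝ≥0∞)^0 * (l₁ k + l₂ k + δ) := by
          simp
  | succ j ih =>
    intro m F G k hinv hm hF hG hk1 hk2
    obtain ⟨x, y, m', F', G', k', hinv', hm'm, hF'F, hG'G, hxF, hyG, htel, hdecay, hk1', hk2'⟩ :=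
      step_sk hS rm h₁ h₂ hδ0 hinv hm hF hG hfin1 hfin2
    have hk1'' : l₁ k' ≠ ∞ := (hk1'.trans_lt (by
      exact ENNReal.add_lt_top.mpr ⟨hk1.lt_top, hδt.lt_top⟩)).ne
    have hk2'' : l₂ k' ≠ ∞ := (hk2'.trans_lt (by
      exact ENNReal.add_lt_top.mpr ⟨hk2.lt_top, hδt.lt_top⟩)).ne
    have IH := ih m' F' G' k' hinv' (hm'm.trans hm) (hF'F.trans hF) (hG'G.trans hG) hk1'' hk2''
    have hmfin : l₁ m ≠ ∞ := ((h₁.mono hm).trans_lt hfin1.lt_top).ne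
    have hhalffin : 2⁻¹ * l₁ m ≠ ∞ := by
      exact ENNReal.mul_ne_top (by norm_num) hmfin
    -- extract the decay bound
    have hdec2 : l₁ m' ≤ 2⁻¹ * l₁ m + (l₁ k + (δ + δ)) := by
      have hsplit : l₁ m = 2⁻¹ * l₁ m + 2⁻¹ * l₁ m := by
        rw [← two_mul, ← mul_assoc, ENNReal.mul_inv_cancel (by norm_num) (by norm_num), one_mul]
      have h' : l₁ m' + 2⁻¹ * l₁ m ≤ (2⁻¹ * l₁ m + (l₁ k + (δ + δ))) + 2⁻¹ * l₁ m := by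
        calc l₁ m' + 2⁻¹ * l₁ m ≤ l₁ m + l₁ k + (δ + δ) := hdecay
          _ = (2⁻¹ * l₁ m + 2⁻¹ * l₁ m) + l₁ k + (δ + δ) := by rw [← hsplit]
          _ = (2⁻¹ * l₁ m + (l₁ k + (δ + δ))) + 2⁻¹ * l₁ m := by ring
      exact (ENNReal.add_le_add_iff_right hhalffin).mp h'
    have hpowle : ((2:ℝ≥0∞)⁻¹)^j ≤ 1 := by
      calc ((2:ℝ≥0∞)⁻¹)^j ≤ 1^j := by
            gcongr
            rw [ENNReal.inv_le_one]
            norm_num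
        _ = 1 := one_pow j
    have hdeficit : (2:ℝ≥0∞)⁻¹^j * l₁ m' ≤ (2:ℝ≥0∞)⁻¹^(j+1) * l₁ m + (l₁ k + (δ + δ)) := by
      calc (2:ℝ≥0∞)⁻¹^j * l₁ m' ≤ (2:ℝ≥0∞)⁻¹^j * (2⁻¹ * l₁ m + (l₁ k + (δ + δ))) :=
            mul_le_mul_right hdec2 _
        _ = (2:ℝ≥0∞)⁻¹^(j+1) * l₁ m + (2:ℝ≥0∞)⁻¹^j * (l₁ k + (δ + δ)) := by
            rw [pow_succ]
            ring
        _ ≤ (2:ℝ≥0∞)⁻¹^(j+1) * l₁ m + 1 * (l₁ k + (δ + δ)) := by gcongr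
        _ = (2:ℝ≥0∞)⁻¹^(j+1) * l₁ m + (l₁ k + (δ + δ)) := by rw [one_mul]
    have hJ : (1:ℝ≥0∞) ≤ (7:ℝ≥0∞)^j := by
      calc (1:ℝ≥0∞) = 1^j := (one_pow j).symm
        _ ≤ 7^j := by gcongr; norm_num
    calc l₁ m + l₂ b ≤ (l₁ x + l₁ y + l₁ m' + (δ + δ)) + l₂ b := add_le_add htel le_rfl
      _ = (δ + δ) + (l₁ x + l₁ y) + (l₁ m' + l₂ b) := by ring
      _ ≤ (δ + δ) + (l₁ x + l₁ y) + (klam l₁ l₂ F' + klam l₁ l₂ G'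
            + (2:ℝ≥0∞)⁻¹^j * l₁ m' + (7:ℝ≥0∞)^j * (l₁ k' + l₂ k' + δ)) :=
          add_le_add le_rfl IH
      _ = (l₁ x + klam l₁ l₂ F') + (l₁ y + klam l₁ l₂ G')
            + ((δ + δ) + (2:ℝ≥0∞)⁻¹^j * l₁ m' + (7:ℝ≥0∞)^j * (l₁ k' + l₂ k' + δ)) := by ring
      _ ≤ klam l₁ l₂ F + klam l₁ l₂ G
            + ((δ + δ) + ((2:ℝ≥0∞)⁻¹^(j+1) * l₁ m + (l₁ k + (δ + δ)))
              + (7:ℝ≥0∞)^j * ((l₁ k + δ) + (l₂ k + δ) + δ)) := by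
          refine add_le_add (add_le_add ?_ ?_) (add_le_add (add_le_add le_rfl ?_) ?_)
          · exact klam_add_left hO5 h₁ hxF
          · exact klam_add_left hO5 h₁ hyG
          · exact hdeficit
          · exact mul_le_mul_right (add_le_add (add_le_add hk1' hk2') le_rfl) _
      _ = klam l₁ l₂ F + klam l₁ l₂ G + (2:ℝ≥0∞)⁻¹^(j+1) * l₁ m
            + ((δ + δ) + (l₁ k + (δ + δ))
              + (7:ℝ≥0∞)^j * ((l₁ k + δ) + (l₂ k + δ) + δ)) := by ring
      _ ≤ klam l₁ l₂ F + klam l₁ l₂ G + (2:ℝ≥0∞)⁻¹^(j+1) * l₁ m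
            + (7 * (7:ℝ≥0∞)^j) * (l₁ k + l₂ k + δ) := by
          gcongr
          exact slack_sk hJ
      _ = klam l₁ l₂ F + klam l₁ l₂ G + (2:ℝ≥0∞)⁻¹^(j+1) * l₁ m
            + (7:ℝ≥0∞)^(j+1) * (l₁ k + l₂ k + δ) := by rw [pow_succ]; ring


lemma exists_T_sk (A ε' : ℝ≥0∞) (hA : A ≠ ∞) (hε : ε' ≠ 0) :
    ∃ T : ℕ, (2:ℝ≥0∞)⁻¹^T * A ≤ ε' := by
  rcases eq_or_ne ε' ∞ with rfl | hεt
  · exact ⟨0, le_top⟩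
  obtain ⟨n, hn⟩ := ENNReal.exists_nat_gt (ENNReal.div_lt_top hA hε).ne
  refine ⟨n, ?_⟩
  have hAn : A ≤ (2:ℝ≥0∞)^n * ε' := by
    have h1 : A < (n:ℝ≥0∞) * ε' := by
      have := (ENNReal.div_lt_iff (Or.inl hε) (Or.inl hεt)).mp hn
      exact this
    have h2 : ((n:ℝ≥0∞)) ≤ (2:ℝ≥0∞)^n := by
      calc ((n:ℝ≥0∞)) ≤ ((2^n : ℕ) : ℝ≥0∞) := by
            exact_mod_cast Nat.cast_le.mpr (Nat.le_of_lt (Nat.lt_two_pow_self))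
        _ = (2:ℝ≥0∞)^n := by push_cast; ring
    exact h1.le.trans (mul_le_mul_left h2 ε')
  calc (2:ℝ≥0∞)⁻¹^n * A ≤ (2:ℝ≥0∞)⁻¹^n * ((2:ℝ≥0∞)^n * ε') := mul_le_mul_right hAn _
    _ = ((2:ℝ≥0∞)⁻¹ * 2)^n * ε' := by rw [mul_pow]; ring
    _ = ε' := by rw [ENNReal.inv_mul_cancel (by norm_num) (by norm_num), one_pow, one_mul]

/-- The key subadditivity estimate. -/
lemma key_sk (hS : CuO6 S) (rm : RealMul S) (h₁ : IsFunctional l₁) (h₂ : IsFunctional l₂)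
    {f g e₁ e₂ a b : S} (hsum : e₁ + e₂ ≤ f + g) (ha : CC a e₁) (hb : CC b e₂) :
    l₁ a + l₂ b ≤ klam l₁ l₂ f + klam l₁ l₂ g := by
  have hO5 := hS.toCuO5
  rcases eq_or_ne (klam l₁ l₂ f + klam l₁ l₂ g) ∞ with hM | hM
  · rw [hM]; exact le_top
  have hkf : klam l₁ l₂ f ≠ ∞ := fun h => hM (by rw [h]; simp)
  have hkg : klam l₁ l₂ g ≠ ∞ := fun h => hM (by rw [h]; simp)
  have hfin1 : l₁ (f + g) ≠ ∞ := by
    rw [h₁.map_add]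
    exact (ENNReal.add_lt_top.mpr ⟨(l1_le_klam hO5 h₂ f).trans_lt hkf.lt_top,
      (l1_le_klam hO5 h₂ g).trans_lt hkg.lt_top⟩).ne
  have hfin2 : l₂ (f + g) ≠ ∞ := by
    rw [h₂.map_add]
    exact (ENNReal.add_lt_top.mpr ⟨(l2_le_klam hO5 h₁ f).trans_lt hkf.lt_top,
      (l2_le_klam hO5 h₁ g).trans_lt hkg.lt_top⟩).ne
  have main : ∀ ε : ℝ≥0∞, ε ≠ 0 → ε ≠ ∞ →
      l₁ a + l₂ b ≤ klam l₁ l₂ f + klam l₁ l₂ g + ε := by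
    intro ε hε0 hεt
    have hhalf0 : ε / 2 ≠ 0 := by
      simp [ENNReal.div_eq_zero_iff, hε0]
    obtain ⟨T, hT⟩ := exists_T_sk (l₁ (f + g)) (ε/2) hfin1 hhalf0
    set δ : ℝ≥0∞ := (ε/2) / (7:ℝ≥0∞)^T with hδ
    have h7T0 : ((7:ℝ≥0∞))^T ≠ 0 := by positivity
    have h7Tt : ((7:ℝ≥0∞))^T ≠ ∞ := ENNReal.pow_ne_top (by norm_num)
    have hδ0 : δ ≠ 0 := by
      rw [hδ]
      simp [ENNReal.div_eq_zero_iff, hhalf0, h7Tt]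
    have hδt : δ ≠ ∞ := by
      rw [hδ]
      exact (ENNReal.div_lt_top (by
        exact (ENNReal.div_lt_top hεt (by norm_num)).ne) h7T0).ne
    have hinv : e₁ + e₂ ≤ f + g + 0 := by rw [add_zero]; exact hsum
    have hm : e₁ ≤ f + g := (le_add_right_sk hO5 e₁ e₂).trans hsum
    have hrec := rec_sk hS rm h₁ h₂ hb hfin1 hfin2 hδ0 hδt T e₁ f g 0 hinv hm le_rfl le_rfl
      (by rw [h₁.map_zero]; exact ENNReal.zero_ne_top)
      (by rw [h₂.map_zero]; exact ENNReal.zero_ne_top)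
    have h7δ : (7:ℝ≥0∞)^T * (l₁ 0 + l₂ 0 + δ) = ε / 2 := by
      rw [h₁.map_zero, h₂.map_zero, zero_add, zero_add, hδ,
        ENNReal.mul_div_cancel' (fun h => absurd h h7T0) (fun h => absurd h h7Tt)]
    have hdef : (2:ℝ≥0∞)⁻¹^T * l₁ e₁ ≤ ε / 2 :=
      (mul_le_mul_right (h₁.mono hm) _).trans hT
    calc l₁ a + l₂ b ≤ l₁ e₁ + l₂ b := add_le_add (h₁.mono (cc_le ha)) le_rfl
      _ ≤ klam l₁ l₂ f + klam l₁ l₂ g + (2:ℝ≥0∞)⁻¹^T * l₁ e₁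
          + (7:ℝ≥0∞)^T * (l₁ 0 + l₂ 0 + δ) := hrec
      _ ≤ klam l₁ l₂ f + klam l₁ l₂ g + ε / 2 + ε / 2 := by
          rw [h7δ]
          exact add_le_add (add_le_add le_rfl hdef) le_rfl
      _ = klam l₁ l₂ f + klam l₁ l₂ g + ε := by
          rw [add_assoc, ENNReal.add_halves]
  refine ENNReal.le_of_forall_pos_le_add fun ε hε hlt => ?_
  exact main ε (by exact_mod_cast hε.ne') ENNReal.coe_ne_top

lemma klam_superadd (hS : CuO5 S) (h₁ : IsFunctional l₁) (h₂ : IsFunctional l₂) (f g : S) :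
    klam l₁ l₂ f + klam l₁ l₂ g ≤ klam l₁ l₂ (f + g) := by
  rw [klam, klam, sSup_eq_iSup', sSup_eq_iSup']
  have h1 : Nonempty {v : ℝ≥0∞ // v ∈ {v | ∃ f₁ f₂ : S, f₁ + f₂ ≤ f ∧ v = l₁ f₁ + l₂ f₂}} :=
    klam_nonempty hS f
  have h2 : Nonempty {v : ℝ≥0∞ // v ∈ {v | ∃ f₁ f₂ : S, f₁ + f₂ ≤ g ∧ v = l₁ f₁ + l₂ f₂}} :=
    klam_nonempty hS g
  refine ENNReal.iSup_add_iSup_le ?_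
  rintro ⟨v, f₁, f₂, hle, rfl⟩ ⟨w, g₁, g₂, hle', rfl⟩
  have h3 : (f₁ + g₁) + (f₂ + g₂) ≤ f + g := by
    have e1 : (f₁ + g₁) + (f₂ + g₂) = (f₁ + f₂) + (g₁ + g₂) := by abel
    rw [e1]
    exact add_le_add_sk hS hle hle'
  calc (l₁ f₁ + l₂ f₂) + (l₁ g₁ + l₂ g₂) = l₁ (f₁ + g₁) + l₂ (f₂ + g₂) := by
        rw [h₁.map_add, h₂.map_add]; ring
    _ ≤ klam l₁ l₂ (f + g) := le_klam h3

lemma klam_subadd (hS : CuO6 S) (rm : RealMul S) (h₁ : IsFunctional l₁)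
    (h₂ : IsFunctional l₂) (f g : S) :
    klam l₁ l₂ (f + g) ≤ klam l₁ l₂ f + klam l₁ l₂ g := by
  refine klam_le fun e₁ e₂ hle => ?_
  obtain ⟨as, har, halub⟩ := hS.O2 e₁
  obtain ⟨bs, hbr, hblub⟩ := hS.O2 e₂
  rw [h₁.map_sup as (rapid_mono har) e₁ halub, h₂.map_sup bs (rapid_mono hbr) e₂ hblub]
  refine ENNReal.iSup_add_iSup_le fun n q => ?_
  exact key_sk hS rm h₁ h₂ hle (rapid_cc har halub n) (rapid_cc hbr hblub q)

lemma klam_add (hS : CuO6 S) (rm : RealMul S) (h₁ : IsFunctional l₁)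
    (h₂ : IsFunctional l₂) (f g : S) :
    klam l₁ l₂ (f + g) = klam l₁ l₂ f + klam l₁ l₂ g :=
  le_antisymm (klam_subadd hS rm h₁ h₂ f g) (klam_superadd hS.toCuO5 h₁ h₂ f g)


end SKaux

/-- Regularization of `klam` along compact containment. -/
noncomputable def kmu {S : Type*} [AddCommMonoid S] [PartialOrder S]
    (l₁ l₂ : S → ℝ≥0∞) (f : S) : ℝ≥0∞ :=
  sSup (klam l₁ l₂ '' {f' | CC f' f})

namespace SKaux
variable {S : Type*} [AddCommMonoid S] [PartialOrder S] {l₁ l₂ : S → ℝ≥0∞}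

lemma klam_le_kmu {f' f : S} (h : CC f' f) : klam l₁ l₂ f' ≤ kmu l₁ l₂ f :=
  le_sSup ⟨f', h, rfl⟩

lemma kmu_le {f : S} {c : ℝ≥0∞} (h : ∀ f' : S, CC f' f → klam l₁ l₂ f' ≤ c) :
    kmu l₁ l₂ f ≤ c := by
  refine sSup_le ?_
  rintro x ⟨f', hf', rfl⟩
  exact h f' hf'

lemma kmu_mono {f f' : S} (h : f ≤ f') : kmu l₁ l₂ f ≤ kmu l₁ l₂ f' :=
  kmu_le fun h' hh' => klam_le_kmu (cc_of_le_right hh' h)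

lemma kmu_zero (hS : CuO5 S) (h₁ : IsFunctional l₁) (h₂ : IsFunctional l₂) :
    kmu l₁ l₂ (0:S) = 0 := by
  refine le_antisymm (kmu_le fun f' hf' => ?_) (zero_le)
  have h0 : f' = 0 := le_antisymm (cc_le hf') (hS.zeroLe f')
  rw [h0, klam_zero hS h₁ h₂]

lemma kmu_subtype (f : S) :
    kmu l₁ l₂ f = ⨆ x : {f' : S // f' ∈ {f' | CC f' f}}, klam l₁ l₂ x :=
  sSup_image'

lemma kmu_add (hS : CuO6 S) (rm : RealMul S) (h₁ : IsFunctional l₁)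
    (h₂ : IsFunctional l₂) (f g : S) :
    kmu l₁ l₂ (f + g) = kmu l₁ l₂ f + kmu l₁ l₂ g := by
  have hO5 := hS.toCuO5
  refine le_antisymm ?_ ?_
  · refine kmu_le fun h' hh' => ?_
    obtain ⟨p, hpr, hplub⟩ := hS.O2 f
    obtain ⟨q, hqr, hqlub⟩ := hS.O2 g
    have hsumlub := hS.O4 p q (rapid_mono hpr) (rapid_mono hqr) f g hplub hqlub
    have hsummono : Monotone fun n => p n + q n :=
      fun i j hij => add_le_add_sk hO5 ((rapid_mono hpr) hij) ((rapid_mono hqr) hij)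
    obtain ⟨n, hn⟩ := hh' _ hsummono _ hsumlub le_rfl
    calc klam l₁ l₂ h' ≤ klam l₁ l₂ (p n + q n) := klam_mono hn
      _ = klam l₁ l₂ (p n) + klam l₁ l₂ (q n) := klam_add hS rm h₁ h₂ _ _
      _ ≤ kmu l₁ l₂ f + kmu l₁ l₂ g :=
          add_le_add (klam_le_kmu (rapid_cc hpr hplub n)) (klam_le_kmu (rapid_cc hqr hqlub n))
  · rw [kmu_subtype f, kmu_subtype g]
    have h1 : Nonempty {f' : S // f' ∈ {f' | CC f' f}} := ⟨⟨0, cc_zero hO5 f⟩⟩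
    have h2 : Nonempty {f' : S // f' ∈ {f' | CC f' g}} := ⟨⟨0, cc_zero hO5 g⟩⟩
    refine ENNReal.iSup_add_iSup_le ?_
    rintro ⟨f', hf'⟩ ⟨g', hg'⟩
    calc klam l₁ l₂ f' + klam l₁ l₂ g' = klam l₁ l₂ (f' + g') :=
          (klam_add hS rm h₁ h₂ _ _).symm
      _ ≤ kmu l₁ l₂ (f + g) := klam_le_kmu (hS.O3 hf' hg')

lemma kmu_sup (hS : CuO6 S) {u : ℕ → S} (hu : Monotone u) {x : S}
    (hx : IsLUB (Set.range u) x) :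
    kmu l₁ l₂ x = ⨆ n, kmu l₁ l₂ (u n) := by
  refine le_antisymm ?_ (iSup_le fun n => kmu_mono (hx.1 ⟨n, rfl⟩))
  refine kmu_le fun h' hh' => ?_
  obtain ⟨c, hcr, hclub⟩ := hS.O2 x
  obtain ⟨i, hi⟩ := hh' c (rapid_mono hcr) x hclub le_rfl
  obtain ⟨n, hn⟩ := (rapid_cc hcr hclub (i+1)) u hu x hx le_rfl
  have : CC h' (u n) := cc_of_le_right (cc_of_le_left hi (hcr i)) hn
  exact le_trans (klam_le_kmu this) (le_iSup (fun n => kmu l₁ l₂ (u n)) n)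

lemma l1_le_kmu (hS : CuO6 S) (h₁ : IsFunctional l₁) (h₂ : IsFunctional l₂) (f : S) :
    l₁ f ≤ kmu l₁ l₂ f := by
  obtain ⟨c, hcr, hclub⟩ := hS.O2 f
  rw [h₁.map_sup c (rapid_mono hcr) f hclub]
  refine iSup_le fun n => ?_
  exact (l1_le_klam hS.toCuO5 h₂ (c n)).trans (klam_le_kmu (rapid_cc hcr hclub n))

lemma l2_le_kmu (hS : CuO6 S) (h₁ : IsFunctional l₁) (h₂ : IsFunctional l₂) (f : S) :
    l₂ f ≤ kmu l₁ l₂ f := by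
  obtain ⟨c, hcr, hclub⟩ := hS.O2 f
  rw [h₂.map_sup c (rapid_mono hcr) f hclub]
  refine iSup_le fun n => ?_
  exact (l2_le_klam hS.toCuO5 h₁ (c n)).trans (klam_le_kmu (rapid_cc hcr hclub n))

lemma kmu_le_d {d : S → ℝ≥0∞} (hd : IsFunctional d) (hd1 : ∀ s, l₁ s ≤ d s)
    (hd2 : ∀ s, l₂ s ≤ d s) (f : S) : kmu l₁ l₂ f ≤ d f := by
  refine kmu_le fun f' hf' => ?_
  have hklam : klam l₁ l₂ f' ≤ d f' := by
    refine klam_le fun f₁ f₂ hle => ?_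
    calc l₁ f₁ + l₂ f₂ ≤ d f₁ + d f₂ := add_le_add (hd1 f₁) (hd2 f₂)
      _ = d (f₁ + f₂) := (hd.map_add f₁ f₂).symm
      _ ≤ d f' := hd.mono hle
  exact hklam.trans (hd.mono (cc_le hf'))

end SKaux


/-- the Kantorovich-type formula for the supremum of two functionals. -/
theorem sup_kantorovich {S : Type*} [AddCommMonoid S] [PartialOrder S]
    (hS : CuO6 S) (rm : RealMul S) (l₁ l₂ : S → ℝ≥0∞)
    (h₁ : IsFunctional l₁) (h₂ : IsFunctional l₂) :
    ∀ lam : S → ℝ≥0∞,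
      (lam = fun f => sSup {x | ∃ f₁ f₂ : S, f₁ + f₂ ≤ f ∧ x = l₁ f₁ + l₂ f₂}) →
      (∀ f g : S, lam (f + g) = lam f + lam g) ∧
      IsFSup l₁ l₂ (fun f => sSup (lam '' {f' | CC f' f})) := by
  intro lam hlam
  have hkl : lam = klam l₁ l₂ := hlam
  subst hkl
  constructor
  · exact fun f g => SKaux.klam_add hS rm h₁ h₂ f g
  · have hmu : (fun f => sSup (klam l₁ l₂ '' {f' | CC f' f})) = kmu l₁ l₂ := rfl
    rw [hmu]
    refine ⟨⟨SKaux.kmu_zero hS.toCuO5 h₁ h₂, SKaux.kmu_add hS rm h₁ h₂,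
      fun {s t} h => SKaux.kmu_mono h,
      fun u hu x hx => SKaux.kmu_sup hS hu hx⟩,
      SKaux.l1_le_kmu hS h₁ h₂, SKaux.l2_le_kmu hS h₁ h₂,
      fun d hd hd1 hd2 => SKaux.kmu_le_d hd hd1 hd2⟩
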